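/- Let α ∈ (0,1) and q ∈ (1,∞), and set ϑ = min{2/q, 1}. Let Q be a probability measure on ℝ with support contained in [−1,1], whose α-quantile set is a singleton {t*}, and which has an α-quantile of type q with constants b_Q > 0, a_Q ∈ (0,2]; set γ_Q = b_Q a_Q^{q−1}. Then for every t ∈ [−1,1]: ∫ (ρ_α(y,t) − ρ_α(y,t*))² dQ(y) ≤ 2^{2−ϑ} · q^ϑ · γ_Q^{−ϑ} · ( ∫ (ρ_α(y,t) − ρ_α(y,t*)) dQ(y) )^ϑ. -/

import Mathlib

open MeasureTheory Real

/-- The quantile (pinball) loss of a prediction `t` for an outcome `y` at level `α`. -/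
noncomputable def pinball (α y t : ℝ) : ℝ :=
  if t < y then α * (y - t) else (1 - α) * (t - y)

/-- The `α`-quantile set of a measure `Q` on `ℝ`. -/
def quantileSet (α : ℝ) (Q : Measure ℝ) : Set ℝ :=
  {t : ℝ | ENNReal.ofReal α ≤ Q (Set.Iic t) ∧ ENNReal.ofReal (1 - α) ≤ Q (Set.Ici t)}

lemma pinball_meas (α t : ℝ) : Measurable (fun y => pinball α y t) := by
  unfold pinball
  exact Measurable.ite measurableSet_Ioi (by fun_prop) (by fun_prop)

lemma pinball_lip {α : ℝ} (hα : α ∈ Set.Ioo (0:ℝ) 1) (y t t' : ℝ) :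
    |pinball α y t - pinball α y t'| ≤ |t - t'| := by
  obtain ⟨h0, h1⟩ := hα
  have h2 := le_abs_self (t - t')
  have h3 := neg_abs_le (t - t')
  unfold pinball
  split_ifs with ha hb hb <;> rw [abs_le] <;> constructor <;> nlinarith

lemma pinball_neg (α y t : ℝ) : pinball (1-α) (-y) (-t) = pinball α y t := by
  unfold pinball
  rcases lt_trichotomy t y with h | h | h
  · rw [if_neg (by linarith), if_pos h]; ring
  · subst h; rw [if_neg (by linarith), if_neg (by linarith)]; ring
  · rw [if_pos (by linarith), if_neg (by linarith)]; ring

lemma integrable_of_bdd {f : ℝ → ℝ} (Q : Measure ℝ) [IsProbabilityMeasure Q]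
    (hm : Measurable f) (C : ℝ) (hC : ∀ y, |f y| ≤ C) : Integrable f Q :=
  (integrable_const C).mono' hm.aestronglyMeasurable
    (Filter.Eventually.of_forall fun y => by simpa using hC y)

lemma core {α q : ℝ} (hα : α ∈ Set.Ioo (0:ℝ) 1) (hq : 1 < q)
    (Q : Measure ℝ) [IsProbabilityMeasure Q]
    (tstar t : ℝ) (htt : tstar ≤ t)
    (b a : ℝ) (hb : 0 < b) (ha : 0 < a)
    (hQt : ENNReal.ofReal α ≤ Q (Set.Iic tstar))
    (htype : ∀ s ∈ Set.Icc (0:ℝ) a,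
      ENNReal.ofReal (b * s ^ (q-1)) ≤ Q (Set.Ioo tstar (tstar + s))) :
    b / q * (min (t - tstar) a) ^ (q-1) * (t - tstar) ≤
      ∫ y, (pinball α y t - pinball α y tstar) ∂Q := by
  obtain ⟨hα0, hα1⟩ := hα
  rcases eq_or_lt_of_le htt with heq | hlt
  · subst heq; simp
  set d : ℝ := t - tstar with hdd
  have hd : 0 < d := by simp [hdd]; linarith
  set m : ℝ := min d a with hmm
  have hm0 : 0 < m := lt_min hd ha
  set g : ℝ → ℝ := fun y => pinball α y t - pinball α y tstar with hg
  set f : ℝ → ℝ := Set.indicator (Set.Ioi tstar) (fun y => max (d - (y - tstar)) 0) with hf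
  have hgmeas : Measurable g := (pinball_meas α t).sub (pinball_meas α tstar)
  have hgint : Integrable g Q := integrable_of_bdd Q hgmeas |t - tstar|
    (fun y => pinball_lip ⟨hα0, hα1⟩ y t tstar)
  have hfmeas : Measurable f :=
    Measurable.indicator ((measurable_const.sub (measurable_id.sub measurable_const)).max
      measurable_const) measurableSet_Ioi
  have hfnn : ∀ y, 0 ≤ f y := by
    intro y; rw [hf, Set.indicator_apply]
    split <;> simp
  have hfle : ∀ y, f y ≤ d := by
    intro y
    rw [hf, Set.indicator_apply]
    split
    · rename_i hy
      simp only [Set.mem_Ioi] at hy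
      rw [max_le_iff]
      constructor <;> [linarith; exact hd.le]
    · exact hd.le
  have hfint : Integrable f Q := integrable_of_bdd Q hfmeas d
    (fun y => by rw [abs_of_nonneg (hfnn y)]; exact hfle y)
  -- identity
  have hident : ∀ y, g y = ((1-α)*d - d * Set.indicator (Set.Ioi tstar) (fun _ => (1:ℝ)) y)
      + f y := by
    intro y
    rcases le_or_gt y tstar with h1 | h1
    · have : y ∉ Set.Ioi tstar := by simpa using h1
      rw [hf, hg, Set.indicator_of_notMem this, Set.indicator_of_notMem this]
      simp only [pinball, if_neg (by linarith : ¬ t < y), if_neg (by linarith : ¬ tstar < y)]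
      simp only [hdd]; ring
    · have hmem : y ∈ Set.Ioi tstar := h1
      rw [hf, hg, Set.indicator_of_mem hmem, Set.indicator_of_mem hmem]
      rcases le_or_gt y t with h2 | h2
      · have : max (d - (y - tstar)) 0 = d - (y - tstar) := max_eq_left (by simp [hdd]; linarith)
        rw [this]
        simp only [pinball, if_neg (by linarith : ¬ t < y), if_pos h1]
        simp [hdd]; ring
      · have : max (d - (y - tstar)) 0 = 0 := max_eq_right (by simp [hdd]; linarith)
        rw [this]
        simp only [pinball, if_pos h2, if_pos h1]
        simp [hdd]; ring
  -- Q(Ioi tstar) ≤ 1 - α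
  have hIoi : (Q (Set.Ioi tstar)).toReal ≤ 1 - α := by
    have h1 : α ≤ (Q (Set.Iic tstar)).toReal :=
      (ENNReal.ofReal_le_iff_le_toReal (measure_ne_top Q _)).mp hQt
    have h2 : Q (Set.Ioi tstar) = 1 - Q (Set.Iic tstar) := by
      have := measure_compl (measurableSet_Iic : MeasurableSet (Set.Iic tstar))
        (measure_ne_top Q _)
      rw [Set.compl_Iic] at this
      rw [this, measure_univ]
    rw [h2, ENNReal.toReal_sub_of_le (by exact prob_le_one) (by simp)]
    simp only [ENNReal.toReal_one]
    linarith
  -- integral decomposition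
  have hindint : Integrable (Set.indicator (Set.Ioi tstar) (fun _ => (1:ℝ))) Q :=
    (integrable_const (1:ℝ)).indicator measurableSet_Ioi
  have hEdec : ∫ y, g y ∂Q = ((1-α)*d - d * (Q (Set.Ioi tstar)).toReal) + ∫ y, f y ∂Q := by
    rw [show (fun y => g y) = fun y =>
        (((1-α)*d - d * Set.indicator (Set.Ioi tstar) (fun _ => (1:ℝ)) y) + f y)
      from funext hident]
    have h1 : Integrable (fun y => (1-α)*d - d * Set.indicator (Set.Ioi tstar) (fun _ => (1:ℝ)) y) Q :=
      (integrable_const _).sub (hindint.const_mul d)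
    rw [integral_add h1 hfint, integral_sub (integrable_const _) (hindint.const_mul d),
      integral_const, integral_const_mul, integral_indicator_const (1:ℝ) measurableSet_Ioi]
    simp [measure_univ, measureReal_def]
  have hEf : ∫ y, f y ∂Q ≤ ∫ y, g y ∂Q := by
    rw [hEdec]
    nlinarith [hd.le]
  -- layer cake lower bound for ∫ f
  have hJ : b / q * m ^ (q-1) * d ≤ ∫ y, f y ∂Q := by
    have hq1 : (0:ℝ) < q - 1 := by linarith
    set φ : ℝ → ℝ := fun u => b * (min (d - u) a) ^ (q-1) with hφ
    have hlayer : ∫⁻ y, ENNReal.ofReal (f y) ∂Q = ∫⁻ u in Set.Ioi 0, Q {y | u < f y} :=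
      lintegral_eq_lintegral_meas_lt Q (Filter.Eventually.of_forall hfnn) hfmeas.aemeasurable
    have hmeasb : ∀ u ∈ Set.Ioo (0:ℝ) d, ENNReal.ofReal (φ u) ≤ Q {y | u < f y} := by
      intro u hu
      obtain ⟨hu0, hud⟩ := hu
      have hs0 : 0 ≤ min (d-u) a := le_min (by linarith) ha.le
      refine le_trans (htype _ ⟨hs0, min_le_right _ _⟩) (measure_mono ?_)
      intro y hy
      obtain ⟨hy1, hy2⟩ := hy
      have hymem : y ∈ Set.Ioi tstar := hy1
      simp only [Set.mem_setOf_eq]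
      rw [hf, Set.indicator_of_mem hymem]
      have h3 : y - tstar < min (d-u) a := by linarith
      have h4 : min (d-u) a ≤ d - u := min_le_left _ _
      have h2 : u < d - (y - tstar) := by linarith
      exact lt_of_lt_of_le h2 (le_max_left _ _)
    have hrpowc : Continuous fun x : ℝ => x ^ (q-1) := by
      rw [continuous_iff_continuousAt]
      intro x
      exact Real.continuousAt_rpow_const x _ (Or.inr (by linarith))
    have hcont : Continuous φ :=
      continuous_const.mul
        (hrpowc.comp ((continuous_const.sub continuous_id).min continuous_const))
    have hφint : IntegrableOn φ (Set.Ioo 0 d) :=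
      (hcont.integrableOn_Icc).mono_set Set.Ioo_subset_Icc_self
    have hφnnon : ∀ u ∈ Set.Ioo (0:ℝ) d, 0 ≤ φ u := by
      intro u hu
      exact mul_nonneg hb.le (Real.rpow_nonneg (le_min (by linarith [hu.2]) ha.le) _)
    have hofReal : ENNReal.ofReal (∫ u in Set.Ioo (0:ℝ) d, φ u)
        = ∫⁻ u in Set.Ioo (0:ℝ) d, ENNReal.ofReal (φ u) :=
      ofReal_integral_eq_lintegral_ofReal hφint
        ((ae_restrict_iff' measurableSet_Ioo).2 (Filter.Eventually.of_forall hφnnon))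
    have hchain : ENNReal.ofReal (∫ u in Set.Ioo (0:ℝ) d, φ u)
        ≤ ∫⁻ y, ENNReal.ofReal (f y) ∂Q := by
      rw [hofReal, hlayer]
      exact le_trans (setLIntegral_mono' measurableSet_Ioo hmeasb)
        (lintegral_mono_set Set.Ioo_subset_Ioi_self)
    have hJnn : 0 ≤ ∫ u in Set.Ioo (0:ℝ) d, φ u := setIntegral_nonneg measurableSet_Ioo hφnnon
    have hJle : ∫ u in Set.Ioo (0:ℝ) d, φ u ≤ ∫ y, f y ∂Q := by
      have h5 := ENNReal.toReal_mono hfint.lintegral_lt_top.ne hchain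
      rw [ENNReal.toReal_ofReal hJnn] at h5
      rw [integral_eq_lintegral_of_nonneg_ae (Filter.Eventually.of_forall hfnn)
        hfmeas.aestronglyMeasurable]
      exact h5
    refine le_trans ?_ hJle
    -- pointwise lower bound by b (m/d)^(q-1) (d-u)^(q-1)
    set ψ : ℝ → ℝ := fun u => b * (m/d) ^ (q-1) * (d - u) ^ (q-1) with hψ
    have hpt : ∀ u ∈ Set.Ioo (0:ℝ) d, ψ u ≤ φ u := by
      intro u hu
      obtain ⟨hu0, hud⟩ := hu
      have hv0 : (0:ℝ) ≤ d - u := by linarith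
      have hmd : m ≤ d := min_le_left _ _
      have hma : m ≤ a := min_le_right _ _
      have hbase : m / d * (d - u) ≤ min (d-u) a := by
        rcases le_total (d-u) a with h|h
        · rw [min_eq_left h]
          have h6 : m / d ≤ 1 := by rw [div_le_one hd]; exact hmd
          nlinarith
        · rw [min_eq_right h]
          have h7 : m / d * (d-u) ≤ m := by
            rw [div_mul_eq_mul_div, div_le_iff₀ hd]
            nlinarith [hm0.le]
          linarith
      have h8 := Real.rpow_le_rpow (by positivity) hbase (by linarith : (0:ℝ) ≤ q-1)
      rw [Real.mul_rpow (by positivity) hv0] at h8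
      calc ψ u = b * ((m/d)^(q-1) * (d-u)^(q-1)) := by rw [hψ]; ring
        _ ≤ b * (min (d-u) a)^(q-1) := mul_le_mul_of_nonneg_left h8 hb.le
        _ = φ u := rfl
    have hψcont : Continuous ψ :=
      (continuous_const.mul (hrpowc.comp (continuous_const.sub continuous_id)))
    have hψint : IntegrableOn ψ (Set.Ioo 0 d) :=
      (hψcont.integrableOn_Icc).mono_set Set.Ioo_subset_Icc_self
    refine le_trans (le_of_eq ?_) (setIntegral_mono_on hψint hφint measurableSet_Ioo hpt)
    -- compute ∫ ψ over Ioo 0 d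
    have hdq1 : (0:ℝ) < d ^ (q-1) := Real.rpow_pos_of_pos hd _
    have hcomp : ∫ u in Set.Ioo (0:ℝ) d, ψ u = b * (m/d)^(q-1) * (d^q / q) := by
      rw [← integral_Ioc_eq_integral_Ioo, ← intervalIntegral.integral_of_le hd.le]
      rw [hψ]
      rw [intervalIntegral.integral_const_mul]
      rw [intervalIntegral.integral_comp_sub_left (fun v => v ^ (q-1)) d]
      simp only [sub_zero, sub_self]
      rw [integral_rpow (Or.inl (by linarith))]
      rw [Real.zero_rpow (by linarith : q - 1 + 1 ≠ 0)]
      rw [show q - 1 + 1 = q by ring]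
      ring
    rw [hcomp, Real.div_rpow hm0.le hd.le,
      show q = q - 1 + 1 by ring, Real.rpow_add hd, Real.rpow_one,
      show q - 1 + 1 = q by ring]
    field_simp
  calc b / q * (min (t - tstar) a) ^ (q-1) * (t - tstar)
      = b / q * m ^ (q-1) * d := by rw [hmm, hdd]
    _ ≤ ∫ y, f y ∂Q := hJ
    _ ≤ ∫ y, g y ∂Q := hEf


lemma final {q ϑ b a d L E : ℝ} (hq : 1 < q) (hϑ : ϑ = min (2/q) 1) (hb : 0 < b)
    (ha : 0 < a) (ha2 : a ≤ 2) (hd : 0 < d) (hd2 : d ≤ 2)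
    (hL : L ≤ d^2) (hE : b/q * (min d a)^(q-1) * d ≤ E) :
    L ≤ 2^(2-ϑ) * q^ϑ * (b * a^(q-1))^(-ϑ) * E^ϑ := by
  have hq0 : (0:ℝ) < q := by linarith
  have hϑ0 : (0:ℝ) < ϑ := by rw [hϑ]; exact lt_min (by positivity) one_pos
  have hϑ1 : ϑ ≤ 1 := hϑ ▸ min_le_right _ _
  have hqϑ : q * ϑ ≤ 2 := by
    have h9 : ϑ ≤ 2/q := hϑ ▸ min_le_left _ _
    calc q * ϑ ≤ q * (2/q) := by nlinarith
      _ = 2 := by field_simp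
  set m := min d a with hm
  have hm0 : 0 < m := lt_min hd ha
  have hmd : m ≤ d := min_le_left _ _
  have hma : m ≤ a := min_le_right _ _
  have hP0 : 0 < b/q * m^(q-1) * d := by positivity
  have hE0 : 0 < E := lt_of_lt_of_le hP0 hE
  have hEpow : (b/q * m^(q-1) * d)^ϑ ≤ E^ϑ := Real.rpow_le_rpow hP0.le hE hϑ0.le
  have hba : (0:ℝ) < b * a^(q-1) := by positivity
  have e1 : Real.log (2^(2-ϑ) * q^ϑ * (b*a^(q-1))^(-ϑ) * (b/q * m^(q-1) * d)^ϑ)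
      = (2-ϑ)*Real.log 2 + ϑ*Real.log q + (-ϑ)*(Real.log b + (q-1)*Real.log a)
        + ϑ*((Real.log b - Real.log q + (q-1)*Real.log m) + Real.log d) := by
    rw [Real.log_mul (ne_of_gt (by positivity)) (ne_of_gt (by positivity)),
       Real.log_mul (ne_of_gt (by positivity)) (ne_of_gt (by positivity)),
       Real.log_mul (ne_of_gt (by positivity)) (ne_of_gt (by positivity)),
       Real.log_rpow two_pos, Real.log_rpow hq0, Real.log_rpow hba, Real.log_rpow hP0,
       Real.log_mul hb.ne' (ne_of_gt (by positivity)), Real.log_rpow ha,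
       Real.log_mul (ne_of_gt (by positivity)) hd.ne',
       Real.log_mul (ne_of_gt (by positivity)) (ne_of_gt (by positivity)),
       Real.log_div hb.ne' hq0.ne', Real.log_rpow hm0]
  have key : d^(2:ℝ) ≤ 2^(2-ϑ) * q^ϑ * (b*a^(q-1))^(-ϑ) * (b/q * m^(q-1) * d)^ϑ := by
    rw [← Real.log_le_log_iff (by positivity) (by positivity), Real.log_rpow hd, e1]
    have hld2 : Real.log d ≤ Real.log 2 := Real.log_le_log hd hd2
    have hla2 : Real.log a ≤ Real.log 2 := Real.log_le_log ha ha2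
    rcases le_total d a with h | h
    · have hmm : m = d := min_eq_left h
      rw [hmm]
      have h1 : 0 ≤ (2 - q*ϑ) * (Real.log 2 - Real.log d) := by
        apply mul_nonneg (by linarith) (by linarith)
      have h2 : 0 ≤ ((q-1)*ϑ) * (Real.log 2 - Real.log a) := by
        apply mul_nonneg (by nlinarith) (by linarith)
      nlinarith [h1, h2]
    · have hmm : m = a := min_eq_right h
      rw [hmm]
      have h3 : 0 ≤ (2 - ϑ) * (Real.log 2 - Real.log d) := by
        apply mul_nonneg (by linarith) (by linarith)
      nlinarith [h3]
  calc L ≤ d^2 := hL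
    _ = d^(2:ℝ) := by rw [← Real.rpow_natCast d 2]; norm_num
    _ ≤ 2^(2-ϑ) * q^ϑ * (b*a^(q-1))^(-ϑ) * (b/q * m^(q-1) * d)^ϑ := key
    _ ≤ 2^(2-ϑ) * q^(ϑ) * (b*a^(q-1))^(-ϑ) * E^ϑ := by
      have hc : (0:ℝ) < 2^(2-ϑ) * q^ϑ * (b*a^(q-1))^(-ϑ) := by positivity
      exact mul_le_mul_of_nonneg_left hEpow hc.le



/-- Covariate-free Steinwart–Christmann variance bound: if `Q` is supported in `[-1,1]`,
has a unique `α`-quantile `t*`, and has an `α`-quantile of type `q` with constants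
`b_Q > 0`, `a_Q ∈ (0,2]`, then for every `t ∈ [-1,1]`,
`∫ (ρ_α(y,t) - ρ_α(y,t*))² dQ ≤ 2^{2-ϑ} q^ϑ γ_Q^{-ϑ} (∫ (ρ_α(y,t) - ρ_α(y,t*)) dQ)^ϑ`,
where `γ_Q = b_Q a_Q^{q-1}` and `ϑ = min{2/q, 1}`. -/
theorem stmt9 (α : ℝ) (hα : α ∈ Set.Ioo (0 : ℝ) 1) (q : ℝ) (hq : 1 < q)
    (ϑ : ℝ) (hϑ : ϑ = min (2 / q) 1)
    (Q : Measure ℝ) [IsProbabilityMeasure Q]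
    (hsupp : Q (Set.Icc (-1 : ℝ) 1)ᶜ = 0)
    (tstar : ℝ) (hsingleton : quantileSet α Q = {tstar})
    (bQ aQ : ℝ) (hbQ : 0 < bQ) (haQ : aQ ∈ Set.Ioc (0 : ℝ) 2)
    (htype : ∀ s ∈ Set.Icc (0 : ℝ) aQ,
      ENNReal.ofReal (bQ * s ^ (q - 1)) ≤ Q (Set.Ioo (tstar - s) tstar) ∧
      ENNReal.ofReal (bQ * s ^ (q - 1)) ≤ Q (Set.Ioo tstar (tstar + s)))
    (t : ℝ) (ht : t ∈ Set.Icc (-1 : ℝ) 1) :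
    (∫ y, (pinball α y t - pinball α y tstar) ^ 2 ∂Q) ≤
      2 ^ (2 - ϑ) * q ^ ϑ * (bQ * aQ ^ (q - 1)) ^ (-ϑ) *
        (∫ y, (pinball α y t - pinball α y tstar) ∂Q) ^ ϑ := by
  obtain ⟨hα0, hα1⟩ := hα
  obtain ⟨ha0, ha2⟩ := haQ
  have htsQ : tstar ∈ quantileSet α Q := by rw [hsingleton]; exact rfl
  obtain ⟨hQle, hQge⟩ := htsQ
  have hq1 : (0:ℝ) < q - 1 := by linarith
  have hts1 : tstar ≤ 1 := by
    by_contra h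
    push_neg at h
    set s := min aQ (tstar - 1) with hs
    have hs0 : 0 < s := lt_min ha0 (by linarith)
    have h1 := (htype s ⟨hs0.le, min_le_left _ _⟩).1
    have hzero : Q (Set.Ioo (tstar - s) tstar) = 0 := by
      apply measure_mono_null _ hsupp
      intro y hy
      simp only [Set.mem_compl_iff, Set.mem_Icc, not_and_or, not_le]
      right
      have h2 : s ≤ tstar - 1 := min_le_right _ _
      linarith [hy.1]
    rw [hzero, le_zero_iff, ENNReal.ofReal_eq_zero] at h1
    nlinarith [Real.rpow_pos_of_pos hs0 (q-1)]
  have hts2 : -1 ≤ tstar := by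
    by_contra h
    push_neg at h
    set s := min aQ (-1 - tstar) with hs
    have hs0 : 0 < s := lt_min ha0 (by linarith)
    have h1 := (htype s ⟨hs0.le, min_le_left _ _⟩).2
    have hzero : Q (Set.Ioo tstar (tstar + s)) = 0 := by
      apply measure_mono_null _ hsupp
      intro y hy
      simp only [Set.mem_compl_iff, Set.mem_Icc, not_and_or, not_le]
      left
      have h2 : s ≤ -1 - tstar := min_le_right _ _
      linarith [hy.2]
    rw [hzero, le_zero_iff, ENNReal.ofReal_eq_zero] at h1
    nlinarith [Real.rpow_pos_of_pos hs0 (q-1)]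
  have hgmeas : Measurable (fun y => pinball α y t - pinball α y tstar) :=
    (pinball_meas α t).sub (pinball_meas α tstar)
  have hptb : ∀ y, (pinball α y t - pinball α y tstar)^2 ≤ (t - tstar)^2 := by
    intro y
    calc (pinball α y t - pinball α y tstar)^2
        = |pinball α y t - pinball α y tstar|^2 := (sq_abs _).symm
      _ ≤ |t - tstar|^2 := pow_le_pow_left₀ (abs_nonneg _) (pinball_lip ⟨hα0,hα1⟩ y t tstar) 2
      _ = (t - tstar)^2 := sq_abs _
  have hL : ∫ y, (pinball α y t - pinball α y tstar)^2 ∂Q ≤ (t - tstar)^2 := by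
    have hint2 : Integrable (fun y => (pinball α y t - pinball α y tstar)^2) Q := by
      apply integrable_of_bdd Q (hgmeas.pow_const 2) ((t - tstar)^2)
      intro y
      rw [abs_of_nonneg (sq_nonneg _)]
      exact hptb y
    calc ∫ y, (pinball α y t - pinball α y tstar)^2 ∂Q
        ≤ ∫ _, (t - tstar)^2 ∂Q := integral_mono hint2 (integrable_const _) hptb
      _ = (t - tstar)^2 := by simp [measure_univ]
  rcases lt_trichotomy t tstar with hlt | heq | hgt
  · -- t < tstar : reflection
    set Q' := Q.map (fun y : ℝ => -y) with hQ'
    haveI : IsProbabilityMeasure Q' := Measure.isProbabilityMeasure_map measurable_neg.aemeasurable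
    have hQle' : ENNReal.ofReal (1-α) ≤ Q' (Set.Iic (-tstar)) := by
      rw [hQ', Measure.map_apply measurable_neg measurableSet_Iic]
      have hpre : (fun y : ℝ => -y) ⁻¹' (Set.Iic (-tstar)) = Set.Ici tstar := by
        ext y; simp
      rw [hpre]; exact hQge
    have htype' : ∀ s ∈ Set.Icc (0:ℝ) aQ,
        ENNReal.ofReal (bQ * s ^ (q-1)) ≤ Q' (Set.Ioo (-tstar) (-tstar + s)) := by
      intro s hs
      rw [hQ', Measure.map_apply measurable_neg measurableSet_Ioo]
      have hpre : (fun y : ℝ => -y) ⁻¹' (Set.Ioo (-tstar) (-tstar + s))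
          = Set.Ioo (tstar - s) tstar := by
        ext y
        simp only [Set.mem_preimage, Set.mem_Ioo]
        constructor <;> rintro ⟨h1, h2⟩ <;> constructor <;> linarith
      rw [hpre]; exact (htype s hs).1
    have hcore := core (α := 1-α) ⟨by linarith, by linarith⟩ hq Q' (-tstar) (-t)
      (by linarith) bQ aQ hbQ ha0 hQle' htype'
    have hmeas' : Measurable (fun y => pinball (1-α) y (-t) - pinball (1-α) y (-tstar)) :=
      (pinball_meas _ _).sub (pinball_meas _ _)
    have hmap : ∫ y, (pinball (1-α) y (-t) - pinball (1-α) y (-tstar)) ∂Q'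
        = ∫ y, (pinball α y t - pinball α y tstar) ∂Q := by
      rw [hQ', integral_map measurable_neg.aemeasurable hmeas'.aestronglyMeasurable]
      simp only [pinball_neg]
    rw [show -t - -tstar = tstar - t by ring] at hcore
    rw [hmap] at hcore
    have hL' : ∫ y, (pinball α y t - pinball α y tstar)^2 ∂Q ≤ (tstar - t)^2 := by
      rw [show (tstar - t)^2 = (t - tstar)^2 by ring]; exact hL
    exact final hq hϑ hbQ ha0 ha2 (by linarith) (by linarith [ht.1]) hL' hcore
  · subst heq
    have hϑ0 : (0:ℝ) < ϑ := by
      rw [hϑ]; exact lt_min (div_pos two_pos (by linarith)) one_pos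
    simp [sub_self, Real.zero_rpow hϑ0.ne']
  · -- tstar < t
    have hE := core ⟨hα0, hα1⟩ hq Q tstar t hgt.le bQ aQ hbQ ha0 hQle
      (fun s hs => (htype s hs).2)
    exact final hq hϑ hbQ ha0 ha2 (by linarith) (by linarith [ht.2]) hL hE
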